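/- Let (X,ρ,W) be a hyperbolic space, C ⊆ X nonempty convex, (M,d) a metric space, T : (C × M)_∞ → (C × M)_∞ nonexpansive, δ : M → C a nonexpansive selection function, and (λ_n) a sequence in [0,1]. For u ∈ M let T_u(x) = P_1(T(x,u)) and let (δ(u))_n denote the Krasnoselski-Mann iteration of T_u starting at δ(u). Define for each n ≥ 0 the map φ_n : M → M by φ_n(u) = P_2(T((δ(u))_n, u)). Then each φ_n is nonexpansive. -/
import Mathlib


open Metric Set

/-- Krasnoselski-Mann iteration: x₀ := x, x_{n+1} := W(x_n, T(x_n), λ_n). -/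
def KM {X : Type*} (W : X → X → ℝ → X) (T : X → X) (lam : ℕ → ℝ) (x : X) : ℕ → X
  | 0 => x
  | n + 1 => W (KM W T lam x n) (T (KM W T lam x n)) (lam n)

/-- Each map φ_n(u) = P₂(T((δ(u))_n, u)) is nonexpansive. -/
theorem phi_n_nonexpansive {X M : Type*} [MetricSpace X] [MetricSpace M] (W : X → X → ℝ → X)
    (hW1 : ∀ x y z : X, ∀ l ∈ Set.Icc (0:ℝ) 1,
      dist z (W x y l) ≤ (1 - l) * dist z x + l * dist z y)
    (hW2 : ∀ x y : X, ∀ l ∈ Set.Icc (0:ℝ) 1, ∀ l' ∈ Set.Icc (0:ℝ) 1,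
      dist (W x y l) (W x y l') = |l - l'| * dist x y)
    (hW3 : ∀ x y : X, ∀ l ∈ Set.Icc (0:ℝ) 1, W x y l = W y x (1 - l))
    (hW4 : ∀ x y z w : X, ∀ l ∈ Set.Icc (0:ℝ) 1,
      dist (W x z l) (W y w l) ≤ (1 - l) * dist x y + l * dist z w)
    (C : Set X) (hC : C.Nonempty)
    (hconv : ∀ x ∈ C, ∀ y ∈ C, ∀ l ∈ Set.Icc (0:ℝ) 1, W x y l ∈ C)
    (T : X × M → X × M)
    (hT1 : ∀ x ∈ C, ∀ u : M, (T (x, u)).1 ∈ C)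
    (hTne : ∀ p q : X × M, p.1 ∈ C → q.1 ∈ C → dist (T p) (T q) ≤ dist p q)
    (δ : M → X) (hδC : ∀ u, δ u ∈ C)
    (hδne : ∀ u v : M, dist (δ u) (δ v) ≤ dist u v)
    (lam : ℕ → ℝ) (hlam : ∀ n, lam n ∈ Set.Icc (0:ℝ) 1) :
    ∀ (n : ℕ) (u v : M),
      dist (T (KM W (fun z => (T (z, u)).1) lam (δ u) n, u)).2
           (T (KM W (fun z => (T (z, v)).1) lam (δ v) n, v)).2 ≤ dist u v := by
  intro n u v
  have hmem : ∀ (w : M) (k : ℕ), KM W (fun z => (T (z, w)).1) lam (δ w) k ∈ C := by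
    intro w k
    induction k with
    | zero => exact hδC w
    | succ k ih => exact hconv _ ih _ (hT1 _ ih w) _ (hlam k)
  have key : ∀ k : ℕ,
      dist (KM W (fun z => (T (z, u)).1) lam (δ u) k)
           (KM W (fun z => (T (z, v)).1) lam (δ v) k) ≤ dist u v := by
    intro k
    induction k with
    | zero => exact hδne u v
    | succ k ih =>
      set x := KM W (fun z => (T (z, u)).1) lam (δ u) k with hx
      set y := KM W (fun z => (T (z, v)).1) lam (δ v) k with hy
      have hTxy : dist (T (x, u)).1 (T (y, v)).1 ≤ dist u v := by
        calc dist (T (x, u)).1 (T (y, v)).1 ≤ dist (T (x, u)) (T (y, v)) :=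
              by rw [Prod.dist_eq]; exact le_max_left _ _
          _ ≤ dist ((x, u) : X × M) (y, v) := hTne _ _ (hmem u k) (hmem v k)
          _ = max (dist x y) (dist u v) := rfl
          _ ≤ dist u v := max_le ih le_rfl
      have h4 := hW4 x y (T (x, u)).1 (T (y, v)).1 (lam k) (hlam k)
      obtain ⟨h0, h1⟩ := hlam k
      calc dist (KM W (fun z => (T (z, u)).1) lam (δ u) (k+1))
              (KM W (fun z => (T (z, v)).1) lam (δ v) (k+1))
          ≤ (1 - lam k) * dist x y + lam k * dist (T (x, u)).1 (T (y, v)).1 := h4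
        _ ≤ (1 - lam k) * dist u v + lam k * dist u v := by
            gcongr <;> linarith
        _ = dist u v := by ring
  calc dist (T (KM W (fun z => (T (z, u)).1) lam (δ u) n, u)).2
          (T (KM W (fun z => (T (z, v)).1) lam (δ v) n, v)).2
      ≤ dist (T (KM W (fun z => (T (z, u)).1) lam (δ u) n, u))
          (T (KM W (fun z => (T (z, v)).1) lam (δ v) n, v)) := by rw [Prod.dist_eq]; exact le_max_right _ _
    _ ≤ max (dist (KM W (fun z => (T (z, u)).1) lam (δ u) n)
          (KM W (fun z => (T (z, v)).1) lam (δ v) n)) (dist u v) :=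
        hTne _ _ (hmem u n) (hmem v n)
    _ ≤ dist u v := max_le (key n) le_rfl
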